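/- Let S be the set of functions ℕ → ℕ that arise as evaluations of one-variable terms built from the variable x using only the operations + and ! (factorial), and let ≺ be the eventual strict dominance relation on S. Then (S, ≺) is a well-order whose order type is exactly ε₀, the least ordinal ε satisfying ω^ε = ε. -/

import Mathlib

/-- One-variable terms in the signature {+, !}. -/
inductive FTerm : Type
  | x : FTerm
  | add : FTerm → FTerm → FTerm
  | fact : FTerm → FTerm

/-- Evaluation over ℕ: + is addition and ! is the factorial. -/
def FTerm.eval : FTerm → ℕ → ℕ
  | .x, n => n
  | .add s t, n => s.eval n + t.eval n
  | .fact s, n => Nat.factorial (s.eval n)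

/-- The set S of functions ℕ → ℕ arising as evaluations of {+,!}-terms. -/
def S10 : Type := {f : ℕ → ℕ // ∃ t : FTerm, ∀ n, t.eval n = f n}

/-- Eventual strict dominance: s ≺ t iff s(x) < t(x) for all sufficiently large x. -/
def EvDom (s t : ℕ → ℕ) : Prop := ∃ x₀ : ℕ, ∀ x > x₀, s x < t x

/-- The eventual dominance relation on S. -/
def r10 (a b : S10) : Prop := EvDom a.1 b.1

/-- ε₀: the least ordinal ε with ω^ε = ε. -/
noncomputable def eps0 : Ordinal := sInf {o : Ordinal | Ordinal.omega0 ^ o = o}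

namespace Ordinal

noncomputable def nadd (a b : Ordinal.{0}) : Ordinal.{0} :=
  max (⨆ x : Set.Iio a, Order.succ (nadd x.1 b)) (⨆ y : Set.Iio b, Order.succ (nadd a y.1))
termination_by (a, b)
decreasing_by
  · exact Prod.Lex.left _ _ x.2
  · exact Prod.Lex.right _ y.2

end Ordinal

namespace NaturalOps

infixl:65 " ♯ " => Ordinal.nadd

end NaturalOps

namespace Ordinal

open NaturalOps

theorem nadd_le_iff {a b c : Ordinal.{0}} :
    a ♯ b ≤ c ↔ (∀ a' < a, a' ♯ b < c) ∧ ∀ b' < b, a ♯ b' < c := by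
  rw [nadd, max_le_iff, Ordinal.iSup_le_iff, Ordinal.iSup_le_iff]
  simp only [Order.succ_le_iff, Subtype.forall, Set.mem_Iio]

theorem lt_nadd_iff {a b c : Ordinal.{0}} :
    a < b ♯ c ↔ (∃ b' < b, a ≤ b' ♯ c) ∨ ∃ c' < c, a ≤ b ♯ c' := by
  rw [← not_le, nadd_le_iff]
  simp only [not_and_or, not_forall, not_lt, exists_prop]

theorem nadd_lt_nadd_left {b c : Ordinal.{0}} (h : b < c) (a : Ordinal.{0}) : a ♯ b < a ♯ c :=
  lt_nadd_iff.2 (Or.inr ⟨b, h, le_rfl⟩)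

theorem nadd_lt_nadd_right {b c : Ordinal.{0}} (h : b < c) (a : Ordinal.{0}) : b ♯ a < c ♯ a :=
  lt_nadd_iff.2 (Or.inl ⟨b, h, le_rfl⟩)

theorem nadd_le_nadd_left {b c : Ordinal.{0}} (h : b ≤ c) (a : Ordinal.{0}) : a ♯ b ≤ a ♯ c := by
  rcases h.lt_or_eq with h | rfl
  · exact (nadd_lt_nadd_left h a).le
  · exact le_rfl

theorem nadd_le_nadd_right {b c : Ordinal.{0}} (h : b ≤ c) (a : Ordinal.{0}) : b ♯ a ≤ c ♯ a := by
  rcases h.lt_or_eq with h | rfl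
  · exact (nadd_lt_nadd_right h a).le
  · exact le_rfl

theorem nadd_comm (a b : Ordinal.{0}) : a ♯ b = b ♯ a := by
  induction a using Ordinal.induction generalizing b with
  | _ a IHa =>
  induction b using Ordinal.induction with
  | _ b IHb =>
  apply le_antisymm <;> rw [nadd_le_iff] <;> constructor <;> intro x hx
  · rw [IHa x hx]; exact nadd_lt_nadd_left hx _
  · rw [IHb x hx]; exact nadd_lt_nadd_right hx _
  · rw [← IHb x hx]; exact nadd_lt_nadd_left hx _
  · rw [← IHa x hx]; exact nadd_lt_nadd_right hx _

@[simp] theorem nadd_zero (a : Ordinal.{0}) : a ♯ 0 = a := by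
  induction a using Ordinal.induction with
  | _ a IH =>
  apply le_antisymm
  · rw [nadd_le_iff]
    exact ⟨fun x hx => by rw [IH x hx]; exact hx, fun x hx => absurd hx (not_lt_of_ge zero_le)⟩
  · apply le_of_forall_lt
    intro c hc
    rw [lt_nadd_iff]
    exact Or.inl ⟨c, hc, (IH c hc).ge⟩

@[simp] theorem zero_nadd (a : Ordinal.{0}) : 0 ♯ a = a := by rw [nadd_comm, nadd_zero]

theorem le_self_nadd {a b : Ordinal.{0}} : a ≤ a ♯ b :=
  calc a = a ♯ 0 := (nadd_zero a).symm
    _ ≤ a ♯ b := nadd_le_nadd_left zero_le a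

theorem le_nadd_self {a b : Ordinal.{0}} : a ≤ b ♯ a := by
  rw [nadd_comm]; exact le_self_nadd

theorem le_nadd_left {a b c : Ordinal.{0}} (h : a ≤ c) : a ≤ b ♯ c :=
  h.trans le_nadd_self

theorem nadd_assoc (a b c : Ordinal.{0}) : a ♯ b ♯ c = a ♯ (b ♯ c) := by
  induction a using Ordinal.induction generalizing b c with
  | _ a IHa =>
  induction b using Ordinal.induction generalizing c with
  | _ b IHb =>
  induction c using Ordinal.induction with
  | _ c IHc =>
  apply le_antisymm
  · rw [nadd_le_iff]; constructor
    · intro x hx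
      rcases lt_nadd_iff.1 hx with ⟨a', ha', hx'⟩ | ⟨b', hb', hx'⟩
      · calc x ♯ c ≤ (a' ♯ b) ♯ c := nadd_le_nadd_right hx' c
          _ = a' ♯ (b ♯ c) := IHa a' ha' b c
          _ < a ♯ (b ♯ c) := nadd_lt_nadd_right ha' _
      · calc x ♯ c ≤ (a ♯ b') ♯ c := nadd_le_nadd_right hx' c
          _ = a ♯ (b' ♯ c) := IHb b' hb' c
          _ < a ♯ (b ♯ c) := nadd_lt_nadd_left (nadd_lt_nadd_right hb' c) a
    · intro x hx
      rw [IHc x hx]; exact nadd_lt_nadd_left (nadd_lt_nadd_left hx b) a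
  · rw [nadd_le_iff]; constructor
    · intro x hx
      rw [← IHa x hx]; exact nadd_lt_nadd_right (nadd_lt_nadd_right hx b) c
    · intro x hx
      rcases lt_nadd_iff.1 hx with ⟨b', hb', hx'⟩ | ⟨c', hc', hx'⟩
      · calc a ♯ x ≤ a ♯ (b' ♯ c) := nadd_le_nadd_left hx' a
          _ = a ♯ b' ♯ c := (IHb b' hb' c).symm
          _ < a ♯ b ♯ c := nadd_lt_nadd_right (nadd_lt_nadd_left hb' a) c
      · calc a ♯ x ≤ a ♯ (b ♯ c') := nadd_le_nadd_left hx' a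
          _ = a ♯ b ♯ c' := (IHc c' hc').symm
          _ < a ♯ b ♯ c := nadd_lt_nadd_left hc' _

theorem nadd_one (a : Ordinal.{0}) : a ♯ 1 = Order.succ a := by
  induction a using Ordinal.induction with
  | _ a IH =>
  apply le_antisymm
  · rw [nadd_le_iff]; constructor
    · intro x hx; rw [IH x hx]; exact Order.succ_lt_succ hx
    · intro y hy
      rw [Ordinal.lt_one_iff_zero] at hy
      rw [hy, nadd_zero]; exact Order.lt_succ a
  · apply Order.succ_le_of_lt
    calc a = a ♯ 0 := (nadd_zero a).symm
      _ < a ♯ 1 := nadd_lt_nadd_left zero_lt_one a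

theorem one_nadd (a : Ordinal.{0}) : 1 ♯ a = Order.succ a := by rw [nadd_comm, nadd_one]

theorem nadd_nat (a : Ordinal.{0}) (n : ℕ) : a ♯ n = a + n := by
  induction n with
  | zero => simp [nadd_zero]
  | succ n ih =>
    rw [Nat.cast_succ, ← add_assoc, ← ih, Ordinal.add_one_eq_succ, ← nadd_one, ← nadd_assoc,
      nadd_one, Ordinal.add_one_eq_succ]

theorem nadd_left_cancel {a b c : Ordinal.{0}} (h : a ♯ b = a ♯ c) : b = c := by
  rcases lt_trichotomy b c with h' | h' | h'
  · exact absurd h (nadd_lt_nadd_left h' a).ne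
  · exact h'
  · exact absurd h (nadd_lt_nadd_left h' a).ne'

theorem nadd_lt_nadd_iff_left (a : Ordinal.{0}) {b c : Ordinal.{0}} : a ♯ b < a ♯ c ↔ b < c :=
  ⟨fun h => lt_of_not_ge fun h' => (nadd_le_nadd_left h' a).not_gt h,
    fun h => nadd_lt_nadd_left h a⟩

end Ordinal

/-- Ordinals with natural addition. -/
def NatOrdinal : Type 1 := Ordinal.{0}

noncomputable instance : Zero NatOrdinal := ⟨(0 : Ordinal.{0})⟩

noncomputable instance : Add NatOrdinal := ⟨Ordinal.nadd⟩

noncomputable instance : AddCommMonoid NatOrdinal where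
  add_assoc := Ordinal.nadd_assoc
  zero_add := Ordinal.zero_nadd
  add_zero := Ordinal.nadd_zero
  add_comm := Ordinal.nadd_comm
  nsmul := nsmulRec
  nsmul_zero := fun _ => rfl
  nsmul_succ := fun _ _ => rfl

def Ordinal.toNatOrdinal (a : Ordinal.{0}) : NatOrdinal := a

def NatOrdinal.toOrdinal (a : NatOrdinal) : Ordinal.{0} := a

@[simp] theorem NatOrdinal.toOrdinal_toNatOrdinal (a : Ordinal.{0}) :
    a.toNatOrdinal.toOrdinal = a := rfl

@[simp] theorem Ordinal.toNatOrdinal_toOrdinal (a : NatOrdinal) :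
    a.toOrdinal.toNatOrdinal = a := rfl

@[simp] theorem NatOrdinal.toOrdinal_zero : (0 : NatOrdinal).toOrdinal = 0 := rfl

namespace Ordinal

open NaturalOps

theorem nadd_eq_add (a b : Ordinal.{0}) :
    a ♯ b = (a.toNatOrdinal + b.toNatOrdinal).toOrdinal := rfl

end Ordinal


section Aux

open Ordinal NaturalOps



theorem nadd_cnf_aux (δ : Ordinal)
    (hC : ∀ r s : Ordinal, r < ω ^ δ → s < ω ^ δ → r ♯ s < ω ^ δ) :
    ∀ o k r l s : Ordinal, r < ω ^ δ → s < ω ^ δ →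
      o = (ω ^ δ * k + r) ♯ (ω ^ δ * l + s) → o = ω ^ δ * (k ♯ l) + (r ♯ s) := by
  intro o
  induction o using Ordinal.induction with
  | _ o IH =>
    intro k r l s hr hs ho
    have hω : (ω : Ordinal) ^ δ ≠ 0 := opow_ne_zero δ omega0_ne_zero
    have decomp : ∀ a : Ordinal, a = ω ^ δ * (a / ω ^ δ) + a % ω ^ δ :=
      fun a => (Ordinal.div_add_mod a (ω ^ δ)).symm
    have hmod : ∀ a : Ordinal, a % ω ^ δ < ω ^ δ := fun a => Ordinal.mod_lt a hω
    -- bound : anything of shape ω^δ*k'+e with k'<k is < ω^δ*k+r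
    have bound : ∀ k' k r e : Ordinal, k' < k → e < ω ^ δ → ω ^ δ * k' + e < ω ^ δ * k + r := by
      intro k' k r e hk' he
      calc ω ^ δ * k' + e < ω ^ δ * k' + ω ^ δ := add_lt_add_right he _
        _ = ω ^ δ * Order.succ k' := by rw [mul_succ]
        _ ≤ ω ^ δ * k := mul_le_mul_right (Order.succ_le_of_lt hk') _
        _ ≤ ω ^ δ * k + r := le_self_add
    subst ho
    set a := ω ^ δ * k + r with ha
    set b := ω ^ δ * l + s with hb
    -- the "one-sided" step for the ≤ direction
    have step : ∀ k r l s : Ordinal, r < ω ^ δ → s < ω ^ δ →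
        (ω ^ δ * k + r) ♯ (ω ^ δ * l + s) = a ♯ b →
        ∀ a' < ω ^ δ * k + r, a' ♯ (ω ^ δ * l + s) < ω ^ δ * (k ♯ l) + (r ♯ s) := by
      intro k r l s hr hs hval a' ha'
      have hk'le : a' / ω ^ δ ≤ k := by
        have : a' < ω ^ δ * Order.succ k := by
          calc a' < ω ^ δ * k + r := ha'
            _ < ω ^ δ * k + ω ^ δ := add_lt_add_right hr _
            _ = ω ^ δ * Order.succ k := by rw [mul_succ]
        exact Order.lt_succ_iff.1 ((Ordinal.div_lt hω).2 this)
      have heq : a' ♯ (ω ^ δ * l + s)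
          = ω ^ δ * (a' / ω ^ δ ♯ l) + (a' % ω ^ δ ♯ s) := by
        refine IH _ ?_ _ _ _ _ (hmod a') hs ?_
        · rw [← hval]; exact nadd_lt_nadd_right ha' _
        · rw [← decomp a']
      rcases lt_or_eq_of_le hk'le with hk' | hk'
      · rw [heq]
        calc ω ^ δ * (a' / ω ^ δ ♯ l) + (a' % ω ^ δ ♯ s)
            < ω ^ δ * (a' / ω ^ δ ♯ l) + ω ^ δ := add_lt_add_right (hC _ _ (hmod a') hs) _
          _ = ω ^ δ * Order.succ (a' / ω ^ δ ♯ l) := by rw [mul_succ]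
          _ ≤ ω ^ δ * (k ♯ l) := mul_le_mul_right (Order.succ_le_of_lt (nadd_lt_nadd_right hk' l)) _
          _ ≤ ω ^ δ * (k ♯ l) + (r ♯ s) := le_self_add
      · have hr' : a' % ω ^ δ < r := by
          have := ha'
          rw [decomp a', hk'] at this
          exact lt_of_add_lt_add_left this
        rw [heq, hk']
        exact add_lt_add_right (nadd_lt_nadd_right hr' s) _
    apply le_antisymm
    · refine nadd_le_iff.2 ⟨fun a' ha' => step k r l s hr hs rfl a' ha', fun b' hb' => ?_⟩
      have := step l s k r hs hr (nadd_comm _ _) b' hb'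
      rwa [nadd_comm b' a, nadd_comm l k, nadd_comm s r] at this
    · apply le_of_forall_lt
      intro c hc
      have hmle : c / ω ^ δ ≤ k ♯ l := by
        have : c < ω ^ δ * Order.succ (k ♯ l) := by
          calc c < ω ^ δ * (k ♯ l) + (r ♯ s) := hc
            _ < ω ^ δ * (k ♯ l) + ω ^ δ := add_lt_add_right (hC _ _ hr hs) _
            _ = ω ^ δ * Order.succ (k ♯ l) := by rw [mul_succ]
        exact Order.lt_succ_iff.1 ((Ordinal.div_lt hω).2 this)
      rcases lt_or_eq_of_le hmle with hm | hm
      · -- c / ω^δ < k ♯ l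
        have key : ∀ k r l s : Ordinal, r < ω ^ δ → s < ω ^ δ →
            (ω ^ δ * k + r) ♯ (ω ^ δ * l + s) = a ♯ b →
            ∀ k' < k, c / ω ^ δ ≤ k' ♯ l → c < a ♯ b := by
          intro k r l s hr hs hval k' hk' hm'
          have h1 : ω ^ δ * k' + c % ω ^ δ < ω ^ δ * k + r := bound _ _ _ _ hk' (hmod c)
          have heq : (ω ^ δ * k' + c % ω ^ δ) ♯ (ω ^ δ * l + s)
              = ω ^ δ * (k' ♯ l) + (c % ω ^ δ ♯ s) := by
            refine IH _ ?_ _ _ _ _ (hmod c) hs rfl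
            rw [← hval]; exact nadd_lt_nadd_right h1 _
          calc c = ω ^ δ * (c / ω ^ δ) + c % ω ^ δ := decomp c
            _ ≤ ω ^ δ * (k' ♯ l) + c % ω ^ δ := add_le_add_left (mul_le_mul_right hm' _) _
            _ ≤ ω ^ δ * (k' ♯ l) + (c % ω ^ δ ♯ s) := add_le_add_right le_self_nadd _
            _ = (ω ^ δ * k' + c % ω ^ δ) ♯ (ω ^ δ * l + s) := heq.symm
            _ < (ω ^ δ * k + r) ♯ (ω ^ δ * l + s) := nadd_lt_nadd_right h1 _
            _ = a ♯ b := hval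
        rcases lt_nadd_iff.1 hm with ⟨k', hk', hm'⟩ | ⟨l', hl', hm'⟩
        · exact key k r l s hr hs rfl k' hk' hm'
        · refine key l s k r hs hr (nadd_comm _ _) l' hl' ?_
          rw [nadd_comm l' k]; exact hm'
      · -- c / ω^δ = k ♯ l
        have he : c % ω ^ δ < r ♯ s := by
          have := hc
          rw [decomp c, hm] at this
          exact lt_of_add_lt_add_left this
        have key : ∀ k r l s : Ordinal, r < ω ^ δ → s < ω ^ δ →
            (ω ^ δ * k + r) ♯ (ω ^ δ * l + s) = a ♯ b → k ♯ l = c / ω ^ δ →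
            ∀ r' < r, c % ω ^ δ ≤ r' ♯ s → c < a ♯ b := by
          intro k r l s hr hs hval hkl r' hr' he'
          have h1 : ω ^ δ * k + r' < ω ^ δ * k + r := add_lt_add_right hr' _
          have heq : (ω ^ δ * k + r') ♯ (ω ^ δ * l + s)
              = ω ^ δ * (k ♯ l) + (r' ♯ s) := by
            refine IH _ ?_ _ _ _ _ (hr'.trans hr) hs rfl
            rw [← hval]; exact nadd_lt_nadd_right h1 _
          calc c = ω ^ δ * (c / ω ^ δ) + c % ω ^ δ := decomp c
            _ ≤ ω ^ δ * (c / ω ^ δ) + (r' ♯ s) := add_le_add_right he' _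
            _ = ω ^ δ * (k ♯ l) + (r' ♯ s) := by rw [hkl]
            _ = (ω ^ δ * k + r') ♯ (ω ^ δ * l + s) := heq.symm
            _ < (ω ^ δ * k + r) ♯ (ω ^ δ * l + s) := nadd_lt_nadd_right h1 _
            _ = a ♯ b := hval
        rcases lt_nadd_iff.1 he with ⟨r', hr', he'⟩ | ⟨s', hs', he'⟩
        · exact key k r l s hr hs rfl hm.symm r' hr' he'
        · refine key l s k r hs hr (nadd_comm _ _) (by rw [nadd_comm]; exact hm.symm) s' hs' ?_
          rwa [nadd_comm r s'] at he'

theorem nadd_cnf' (δ : Ordinal)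
    (hC : ∀ r s : Ordinal, r < ω ^ δ → s < ω ^ δ → r ♯ s < ω ^ δ)
    (k r l s : Ordinal) (hr : r < ω ^ δ) (hs : s < ω ^ δ) :
    (ω ^ δ * k + r) ♯ (ω ^ δ * l + s) = ω ^ δ * (k ♯ l) + (r ♯ s) :=
  nadd_cnf_aux δ hC _ k r l s hr hs rfl

/-- ω^γ is closed under natural addition. -/
theorem nadd_lt_omega0_opow : ∀ γ a b : Ordinal, a < ω ^ γ → b < ω ^ γ → a ♯ b < ω ^ γ := by
  intro γ
  induction γ using Ordinal.induction with
  | _ γ IH =>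
    intro a b ha hb
    rcases Ordinal.zero_or_succ_or_isSuccLimit γ with h0 | ⟨δ, rfl⟩ | hlim
    · subst h0
      rw [opow_zero] at *
      rw [Ordinal.lt_one_iff_zero] at ha hb
      subst ha; subst hb
      simpa using zero_lt_one
    · have hC := IH δ (Order.lt_succ δ)
      have hω : (ω : Ordinal) ^ δ ≠ 0 := opow_ne_zero δ omega0_ne_zero
      have hsucc : (ω : Ordinal) ^ Order.succ δ = ω ^ δ * ω := opow_succ ω δ
      rw [hsucc] at ha hb ⊢
      have hka : a / ω ^ δ < ω := (Ordinal.div_lt hω).2 ha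
      have hkb : b / ω ^ δ < ω := (Ordinal.div_lt hω).2 hb
      have heq : a ♯ b = ω ^ δ * (a / ω ^ δ ♯ b / ω ^ δ) + (a % ω ^ δ ♯ b % ω ^ δ) := by
        have := nadd_cnf' δ hC (a / ω ^ δ) (a % ω ^ δ) (b / ω ^ δ) (b % ω ^ δ)
          (Ordinal.mod_lt a hω) (Ordinal.mod_lt b hω)
        rwa [Ordinal.div_add_mod, Ordinal.div_add_mod] at this
      obtain ⟨m, hm⟩ := Ordinal.lt_omega0.1 hka
      obtain ⟨n, hn⟩ := Ordinal.lt_omega0.1 hkb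
      have hklω : a / ω ^ δ ♯ b / ω ^ δ < ω := by
        rw [hm, hn, nadd_nat, ← Nat.cast_add]
        exact nat_lt_omega0 _
      calc a ♯ b = ω ^ δ * (a / ω ^ δ ♯ b / ω ^ δ) + (a % ω ^ δ ♯ b % ω ^ δ) := heq
        _ < ω ^ δ * (a / ω ^ δ ♯ b / ω ^ δ) + ω ^ δ :=
            add_lt_add_right (hC _ _ (Ordinal.mod_lt a hω) (Ordinal.mod_lt b hω)) _
        _ = ω ^ δ * Order.succ (a / ω ^ δ ♯ b / ω ^ δ) := by rw [mul_succ]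
        _ ≤ ω ^ δ * ω := mul_le_mul_right (Order.succ_le_of_lt hklω) _
    · obtain ⟨δa, hδa, ha'⟩ := (lt_opow_of_isSuccLimit omega0_ne_zero hlim).1 ha
      obtain ⟨δb, hδb, hb'⟩ := (lt_opow_of_isSuccLimit omega0_ne_zero hlim).1 hb
      have hδ : max δa δb < γ := max_lt hδa hδb
      have ha'' : a < ω ^ max δa δb :=
        ha'.trans_le (opow_le_opow_right omega0_pos (le_max_left _ _))
      have hb'' : b < ω ^ max δa δb :=
        hb'.trans_le (opow_le_opow_right omega0_pos (le_max_right _ _))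
      exact (IH _ hδ a b ha'' hb'').trans_le (opow_le_opow_right omega0_pos hδ.le)

/-- Natural addition of ω^γ with a smaller-degree ordinal is ordinary addition. -/
theorem omega0_opow_nadd (γ δ' : Ordinal) (h : δ' < ω ^ (γ + 1)) :
    ω ^ γ ♯ δ' = ω ^ γ + δ' := by
  have hC := nadd_lt_omega0_opow γ
  have hω : (ω : Ordinal) ^ γ ≠ 0 := opow_ne_zero γ omega0_ne_zero
  have hsucc : (ω : Ordinal) ^ (γ + 1) = ω ^ γ * ω := by
    rw [Ordinal.add_one_eq_succ, opow_succ]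
  rw [hsucc] at h
  obtain ⟨n, hn⟩ := Ordinal.lt_omega0.1 ((Ordinal.div_lt hω).2 h)
  have key := nadd_cnf' γ hC 1 0 (δ' / ω ^ γ) (δ' % ω ^ γ)
    (opow_pos γ omega0_pos) (Ordinal.mod_lt δ' hω)
  rw [mul_one, add_zero, Ordinal.div_add_mod, zero_nadd] at key
  have hcast : (1 : Ordinal) ♯ (δ' / ω ^ γ) = 1 + δ' / ω ^ γ := by
    rw [hn, one_nadd, ← Ordinal.add_one_eq_succ, ← Nat.cast_one, ← Nat.cast_add, ← Nat.cast_add,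
      Nat.add_comm]
  rw [key, hcast, mul_add, mul_one, add_assoc, Ordinal.div_add_mod]

theorem eps0_fixed : ω ^ eps0 = eps0 := by
  have h : eps0 ∈ {o : Ordinal | Ordinal.omega0 ^ o = o} := by
    refine csInf_mem ⟨nfp (ω ^ ·) 0, ?_⟩
    show ω ^ _ = _
    exact Ordinal.nfp_fp (isNormal_opow one_lt_omega0) 0
  exact h

theorem omega0_le_eps0 : ω ≤ eps0 := by
  have h1 : (1 : Ordinal) ≤ eps0 := by
    rw [← eps0_fixed]
    exact Order.one_le_iff_pos.2 (opow_pos _ omega0_pos)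
  calc ω = ω ^ (1 : Ordinal) := (opow_one ω).symm
    _ ≤ ω ^ eps0 := opow_le_opow_right omega0_pos h1
    _ = eps0 := eps0_fixed

theorem one_lt_eps0 : 1 < eps0 := one_lt_omega0.trans_le omega0_le_eps0

theorem lt_omega0_opow_self_of_lt_eps0 {γ : Ordinal} (h : γ < eps0) : γ < ω ^ γ := by
  rcases lt_or_eq_of_le (right_le_opow γ one_lt_omega0) with h' | h'
  · exact h'
  · exact absurd (csInf_le' (s := {o : Ordinal | ω ^ o = o}) h'.symm) (not_le_of_gt h)

theorem nadd_lt_eps0 {a b : Ordinal} (ha : a < eps0) (hb : b < eps0) : a ♯ b < eps0 := by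
  rw [← eps0_fixed] at *
  exact nadd_lt_omega0_opow _ a b ha hb

theorem sub_opow_log_lt {β : Ordinal} (hβ : β ≠ 0) : β - ω ^ Ordinal.log ω β < β := by
  have hle : ω ^ Ordinal.log ω β ≤ β := opow_log_le_self ω hβ
  have hβeq : ω ^ Ordinal.log ω β + (β - ω ^ Ordinal.log ω β) = β :=
    Ordinal.add_sub_cancel_of_le hle
  rcases lt_or_eq_of_le (Ordinal.sub_le_self β _) with h | h
  · exact h
  · exfalso
    rw [h] at hβeq
    have hmul : ∀ n : ℕ, ω ^ Ordinal.log ω β * n ≤ β := by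
      intro n
      induction n with
      | zero => simp
      | succ n ih =>
        have : ((n + 1 : ℕ) : Ordinal) = 1 + n := by
          rw [Ordinal.one_add_natCast, Nat.cast_succ, Ordinal.add_one_eq_succ]
          exact rfl
        rw [this, mul_add, mul_one]
        calc ω ^ Ordinal.log ω β + ω ^ Ordinal.log ω β * n
            ≤ ω ^ Ordinal.log ω β + β := add_le_add_right ih _
          _ = β := hβeq
    have : ω ^ Order.succ (Ordinal.log ω β) ≤ β := by
      rw [opow_succ]
      refine (Ordinal.mul_le_iff_of_isSuccLimit isSuccLimit_omega0).2 fun b' hb' => ?_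
      obtain ⟨n, rfl⟩ := Ordinal.lt_omega0.1 hb'
      exact hmul n
    exact absurd (lt_opow_succ_log_self one_lt_omega0 β) (not_lt_of_ge this)


deriving instance DecidableEq for FTerm

def FTerm.size : FTerm → ℕ
  | .x => 1
  | .add s t => s.size + t.size + 1
  | .fact s => s.size + 1

noncomputable def FTerm.ordv : FTerm → Ordinal.{0}
  | .x => 1
  | .add s t => s.ordv ♯ t.ordv
  | .fact s => ω ^ s.ordv

def prims : FTerm → List FTerm
  | .x => [.x]
  | .add s t => prims s ++ prims t
  | .fact s => [.fact s]

def IsPrim (t : FTerm) : Prop := t = FTerm.x ∨ ∃ s, t = FTerm.fact s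

def sumEval (L : List FTerm) (n : ℕ) : ℕ := (L.map (fun t => t.eval n)).sum

noncomputable def sumOrd (L : List FTerm) : Ordinal :=
  (((L.map (fun t => (FTerm.ordv t).toNatOrdinal)).sum).toOrdinal : Ordinal.{0})

def sizeL (L : List FTerm) : ℕ := (L.map FTerm.size).sum

@[simp] theorem sumOrd_nil : sumOrd [] = 0 := by simp [sumOrd]

@[simp] theorem sumOrd_cons (p : FTerm) (L : List FTerm) :
    sumOrd (p :: L) = p.ordv ♯ sumOrd L := by
  simp [sumOrd, nadd_eq_add]

theorem sumOrd_append (L M : List FTerm) : sumOrd (L ++ M) = sumOrd L ♯ sumOrd M := by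
  simp [sumOrd, nadd_eq_add]

theorem sumOrd_perm {L M : List FTerm} (h : L.Perm M) : sumOrd L = sumOrd M := by
  simp only [sumOrd]
  rw [(h.map _).sum_eq]

@[simp] theorem sumEval_nil (n : ℕ) : sumEval [] n = 0 := rfl

@[simp] theorem sumEval_cons (p : FTerm) (L : List FTerm) (n : ℕ) :
    sumEval (p :: L) n = p.eval n + sumEval L n := by simp [sumEval]

theorem sumEval_append (L M : List FTerm) (n : ℕ) :
    sumEval (L ++ M) n = sumEval L n + sumEval M n := by simp [sumEval]

theorem sumEval_perm {L M : List FTerm} (h : L.Perm M) (n : ℕ) :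
    sumEval L n = sumEval M n := (h.map _).sum_eq

@[simp] theorem sizeL_cons (p : FTerm) (L : List FTerm) :
    sizeL (p :: L) = p.size + sizeL L := by simp [sizeL]

theorem sizeL_perm {L M : List FTerm} (h : L.Perm M) : sizeL L = sizeL M :=
  (h.map _).sum_eq

theorem one_le_size (t : FTerm) : 1 ≤ t.size := by
  cases t <;> simp [FTerm.size]

theorem le_eval (t : FTerm) (n : ℕ) : n ≤ t.eval n := by
  induction t with
  | x => exact le_rfl
  | add s t ihs iht => exact ihs.trans (Nat.le_add_right _ _)
  | fact s ihs => exact (ihs.trans (Nat.self_le_factorial _))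

theorem one_le_ordv (t : FTerm) : 1 ≤ t.ordv := by
  induction t with
  | x => exact le_rfl
  | add s t ihs iht => exact ihs.trans le_self_nadd
  | fact s ihs => exact Order.one_le_iff_pos.2 (opow_pos _ omega0_pos)

theorem ordv_lt_eps0 (t : FTerm) : t.ordv < eps0 := by
  induction t with
  | x => exact one_lt_eps0
  | add s t ihs iht => exact nadd_lt_eps0 ihs iht
  | fact s ihs =>
    show ω ^ s.ordv < eps0
    calc ω ^ s.ordv < ω ^ eps0 := (opow_lt_opow_iff_right one_lt_omega0).2 ihs
      _ = eps0 := eps0_fixed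

theorem omega0_le_ordv_fact (s : FTerm) : ω ≤ (FTerm.fact s).ordv := by
  show ω ≤ ω ^ s.ordv
  calc ω = ω ^ (1:Ordinal) := (opow_one ω).symm
    _ ≤ ω ^ s.ordv := opow_le_opow_right omega0_pos (one_le_ordv s)

theorem eval_prims (t : FTerm) (n : ℕ) : sumEval (prims t) n = t.eval n := by
  induction t with
  | x => simp [prims, FTerm.eval]
  | add s t ihs iht => simp [prims, FTerm.eval, sumEval_append, ihs, iht]
  | fact s ihs => simp [prims, FTerm.eval]

theorem ordv_prims (t : FTerm) : sumOrd (prims t) = t.ordv := by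
  induction t with
  | x => simp [prims, FTerm.ordv]
  | add s t ihs iht =>
    show sumOrd (prims s ++ prims t) = s.ordv ♯ t.ordv
    rw [sumOrd_append, ihs, iht]
  | fact s ihs => simp [prims, FTerm.ordv]

theorem prims_prim (t : FTerm) : ∀ p ∈ prims t, IsPrim p := by
  induction t with
  | x => intro p hp; simp [prims] at hp; subst hp; exact Or.inl rfl
  | add s t ihs iht =>
    intro p hp
    rcases List.mem_append.1 hp with h | h
    · exact ihs p h
    · exact iht p h
  | fact s ihs =>
    intro p hp; simp [prims] at hp; subst hp; exact Or.inr ⟨s, rfl⟩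

theorem sizeL_prims (t : FTerm) : sizeL (prims t) ≤ t.size := by
  induction t with
  | x => simp [prims, sizeL, FTerm.size]
  | add s t ihs iht =>
    show sizeL (prims s ++ prims t) ≤ s.size + t.size + 1
    have : sizeL (prims s ++ prims t) = sizeL (prims s) + sizeL (prims t) := by
      simp [sizeL]
    omega
  | fact s ihs => simp [prims, sizeL, FTerm.size]

theorem ordv_le_sumOrd {p : FTerm} {L : List FTerm} (h : p ∈ L) : p.ordv ≤ sumOrd L := by
  induction L with
  | nil => simp at h
  | cons a L ih =>
    rw [sumOrd_cons]
    rcases List.mem_cons.1 h with rfl | h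
    · exact le_self_nadd
    · exact le_nadd_left (ih h)

theorem eval_le_sumEval {p : FTerm} {L : List FTerm} (h : p ∈ L) (n : ℕ) :
    p.eval n ≤ sumEval L n := by
  induction L with
  | nil => simp at h
  | cons a L ih =>
    rw [sumEval_cons]
    rcases List.mem_cons.1 h with rfl | h
    · exact Nat.le_add_right _ _
    · exact (ih h).trans (Nat.le_add_left _ _)

theorem size_le_sizeL {p : FTerm} {L : List FTerm} (h : p ∈ L) : p.size ≤ sizeL L := by
  induction L with
  | nil => simp at h
  | cons a L ih =>
    rw [sizeL_cons]
    rcases List.mem_cons.1 h with rfl | h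
    · exact Nat.le_add_right _ _
    · exact (ih h).trans (Nat.le_add_left _ _)

theorem sumOrd_pos {L : List FTerm} (h : L ≠ []) : 0 < sumOrd L := by
  obtain ⟨p, M, rfl⟩ := List.exists_cons_of_ne_nil h
  rw [sumOrd_cons]
  exact lt_of_lt_of_le (lt_of_lt_of_le zero_lt_one (one_le_ordv p)) le_self_nadd

theorem sumOrd_lt_opow {L : List FTerm} {c : Ordinal} (h : ∀ p ∈ L, p.ordv < ω ^ c) :
    sumOrd L < ω ^ c := by
  induction L with
  | nil => rw [sumOrd_nil]; exact opow_pos _ omega0_pos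
  | cons a L ih =>
    rw [sumOrd_cons]
    exact nadd_lt_omega0_opow c _ _ (h a (List.mem_cons_self))
      (ih fun p hp => h p (List.mem_cons_of_mem a hp))

theorem exists_max {α : Type*} [LinearOrder α] (f : FTerm → α) :
    ∀ L : List FTerm, L ≠ [] → ∃ p ∈ L, ∀ q ∈ L, f q ≤ f p := by
  intro L
  induction L with
  | nil => intro h; exact absurd rfl h
  | cons a L ih =>
    intro _
    rcases eq_or_ne L [] with rfl | hL
    · refine ⟨a, List.mem_cons_self, ?_⟩
      intro q hq
      rcases List.mem_cons.1 hq with rfl | h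
      · exact le_rfl
      · simp at h
    · obtain ⟨p, hp, hmax⟩ := ih hL
      rcases le_total (f p) (f a) with h | h
      · refine ⟨a, List.mem_cons_self, ?_⟩
        intro q hq
        rcases List.mem_cons.1 hq with rfl | hq
        · exact le_rfl
        · exact (hmax q hq).trans h
      · refine ⟨p, List.mem_cons_of_mem _ hp, ?_⟩
        intro q hq
        rcases List.mem_cons.1 hq with rfl | hq
        · exact h
        · exact hmax q hq

theorem sum_le_card_mul : ∀ (L : List ℕ) (m : ℕ), (∀ a ∈ L, a ≤ m) → L.sum ≤ L.length * m := by
  intro L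
  induction L with
  | nil => simp
  | cons a L ih =>
    intro m h
    simp only [List.sum_cons, List.length_cons]
    have h1 := h a (List.mem_cons_self)
    have h2 := ih m fun b hb => h b (List.mem_cons_of_mem a hb)
    calc a + L.sum ≤ m + L.length * m := Nat.add_le_add h1 h2
      _ = (L.length + 1) * m := by ring

theorem eventually_all (L : List FTerm) (P : FTerm → ℕ → Prop)
    (h : ∀ p ∈ L, ∃ x₀ : ℕ, ∀ x > x₀, P p x) :
    ∃ x₀ : ℕ, ∀ x > x₀, ∀ p ∈ L, P p x := by
  induction L with
  | nil => exact ⟨0, fun x _ p hp => absurd hp (List.not_mem_nil)⟩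
  | cons a L ih =>
    obtain ⟨x₁, hx₁⟩ := h a (List.mem_cons_self)
    obtain ⟨x₂, hx₂⟩ := ih fun p hp => h p (List.mem_cons_of_mem a hp)
    refine ⟨max x₁ x₂, fun x hx p hp => ?_⟩
    rcases List.mem_cons.1 hp with rfl | hp
    · exact hx₁ x (lt_of_le_of_lt (le_max_left _ _) hx)
    · exact hx₂ x (lt_of_le_of_lt (le_max_right _ _) hx) p hp

/-- If the maximum of `M` exceeds some prim member of `L`, then `sumOrd M < sumOrd L`. -/
theorem sumOrd_lt_of_max_lt {L M : List FTerm} {p q : FTerm}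
    (hqmax : ∀ r ∈ M, r.ordv ≤ q.ordv) (hpL : p ∈ L) (hp : IsPrim p)
    (h : q.ordv < p.ordv) : sumOrd M < sumOrd L := by
  rcases hp with rfl | ⟨u, rfl⟩
  · -- p = x, so p.ordv = 1, but q.ordv ≥ 1
    exfalso
    have : (1:Ordinal) ≤ q.ordv := one_le_ordv q
    have : (1:Ordinal) < FTerm.x.ordv := lt_of_le_of_lt this h
    simp [FTerm.ordv] at this
  · have hfact : (FTerm.fact u).ordv = ω ^ u.ordv := rfl
    rw [hfact] at h
    have hM : sumOrd M < ω ^ u.ordv :=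
      sumOrd_lt_opow fun r hr => lt_of_le_of_lt (hqmax r hr) h
    exact lt_of_lt_of_le hM (hfact ▸ ordv_le_sumOrd hpL)

theorem fact_ordv_gt_one (u : FTerm) : 1 < (FTerm.fact u).ordv :=
  lt_of_lt_of_le one_lt_omega0 (omega0_le_ordv_fact u)

theorem main_eq : ∀ N : ℕ, ∀ L M : List FTerm, sizeL L + sizeL M ≤ N →
    (∀ p ∈ L, IsPrim p) → (∀ p ∈ M, IsPrim p) → sumOrd L = sumOrd M →
    ∀ n, sumEval L n = sumEval M n := by
  intro N
  induction N using Nat.strong_induction_on with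
  | _ N IH =>
    intro L M hN hLp hMp hord n
    rcases eq_or_ne L [] with rfl | hL
    · have hM : M = [] := by
        by_contra hM
        have h0 := sumOrd_pos hM
        rw [← hord, sumOrd_nil] at h0
        exact lt_irrefl _ h0
      subst hM; rfl
    rcases eq_or_ne M [] with rfl | hM
    · exfalso
      have h0 := sumOrd_pos hL
      rw [hord, sumOrd_nil] at h0
      exact lt_irrefl _ h0
    obtain ⟨p, hpL, hpmax⟩ := exists_max FTerm.ordv L hL
    obtain ⟨q, hqM, hqmax⟩ := exists_max FTerm.ordv M hM
    have hpq : p.ordv = q.ordv := by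
      rcases lt_trichotomy p.ordv q.ordv with h | h | h
      · exfalso
        have := sumOrd_lt_of_max_lt hpmax hqM (hMp q hqM) h
        rw [hord] at this
        exact lt_irrefl _ this
      · exact h
      · exfalso
        have := sumOrd_lt_of_max_lt hqmax hpL (hLp p hpL) h
        rw [hord] at this
        exact lt_irrefl _ this
    have hpq_eval : ∀ m, p.eval m = q.eval m := by
      rcases hLp p hpL with rfl | ⟨w, rfl⟩
      · rcases hMp q hqM with rfl | ⟨u, rfl⟩
        · intro m; rfl
        · exfalso
          have := fact_ordv_gt_one u
          rw [← hpq] at this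
          simp [FTerm.ordv] at this
      · rcases hMp q hqM with rfl | ⟨u, rfl⟩
        · exfalso
          have := fact_ordv_gt_one w
          rw [hpq] at this
          simp [FTerm.ordv] at this
        · have hwu : w.ordv = u.ordv := by
            have h' : ω ^ w.ordv = ω ^ u.ordv := hpq
            by_contra hne
            rcases lt_or_gt_of_ne hne with h | h
            · exact absurd h' (ne_of_lt ((opow_lt_opow_iff_right one_lt_omega0).2 h))
            · exact absurd h'.symm (ne_of_lt ((opow_lt_opow_iff_right one_lt_omega0).2 h))
          have hsz : sizeL (prims w) + sizeL (prims u) < N := by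
            have h1 : sizeL (prims w) ≤ w.size := sizeL_prims w
            have h2 : sizeL (prims u) ≤ u.size := sizeL_prims u
            have h3 : (FTerm.fact w).size ≤ sizeL L := size_le_sizeL hpL
            have h4 : (FTerm.fact u).size ≤ sizeL M := size_le_sizeL hqM
            simp only [FTerm.size] at h3 h4
            omega
          have heval := IH _ hsz (prims w) (prims u) le_rfl (prims_prim w) (prims_prim u)
            (by rw [ordv_prims, ordv_prims, hwu])
          intro m
          have := heval m
          rw [eval_prims, eval_prims] at this
          show Nat.factorial (w.eval m) = Nat.factorial (u.eval m)
          rw [this]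
    have hLperm : L.Perm (p :: L.erase p) := List.perm_cons_erase hpL
    have hMperm : M.Perm (q :: M.erase q) := List.perm_cons_erase hqM
    have hordL : sumOrd L = p.ordv ♯ sumOrd (L.erase p) := by
      rw [sumOrd_perm hLperm, sumOrd_cons]
    have hordM : sumOrd M = q.ordv ♯ sumOrd (M.erase q) := by
      rw [sumOrd_perm hMperm, sumOrd_cons]
    have hcancel : sumOrd (L.erase p) = sumOrd (M.erase q) := by
      have : q.ordv ♯ sumOrd (L.erase p) = q.ordv ♯ sumOrd (M.erase q) := by
        rw [← hpq, ← hordL, hord, hordM, hpq]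
      exact nadd_left_cancel this
    have hsz' : sizeL (L.erase p) + sizeL (M.erase q) < N := by
      have h1 : sizeL L = p.size + sizeL (L.erase p) := by
        rw [sizeL_perm hLperm, sizeL_cons]
      have h2 : sizeL M = q.size + sizeL (M.erase q) := by
        rw [sizeL_perm hMperm, sizeL_cons]
      have := one_le_size p
      have := one_le_size q
      omega
    have hIH := IH _ hsz' (L.erase p) (M.erase q) le_rfl
      (fun r hr => hLp r (List.mem_of_mem_erase hr))
      (fun r hr => hMp r (List.mem_of_mem_erase hr)) hcancel
    calc sumEval L n = p.eval n + sumEval (L.erase p) n := by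
          rw [sumEval_perm hLperm, sumEval_cons]
      _ = q.eval n + sumEval (M.erase q) n := by rw [hpq_eval n, hIH n]
      _ = sumEval M n := by rw [sumEval_perm hMperm, sumEval_cons]

theorem ordv_eval_eq {s t : FTerm} (h : s.ordv = t.ordv) (n : ℕ) : s.eval n = t.eval n := by
  have := main_eq (sizeL (prims s) + sizeL (prims t)) (prims s) (prims t) le_rfl
    (prims_prim s) (prims_prim t) (by rw [ordv_prims, ordv_prims, h]) n
  rwa [eval_prims, eval_prims] at this

theorem prim_eval_eq {p q : FTerm} (hp : IsPrim p) (hq : IsPrim q) (h : p.ordv = q.ordv)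
    (m : ℕ) : p.eval m = q.eval m := ordv_eval_eq h m

theorem fact_gt_mul {k x : ℕ} (h : k + 2 ≤ x) : k * x < Nat.factorial x := by
  obtain ⟨m, rfl⟩ : ∃ m, x = m + 1 := ⟨x - 1, by omega⟩
  have h1 : k < m := by omega
  calc k * (m + 1) < m * (m + 1) := by
        exact Nat.mul_lt_mul_of_lt_of_le h1 le_rfl (by omega)
    _ = (m + 1) * m := Nat.mul_comm _ _
    _ ≤ (m + 1) * Nat.factorial m := Nat.mul_le_mul_left _ (Nat.self_le_factorial m)
    _ = Nat.factorial (m + 1) := (Nat.factorial_succ m).symm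

theorem main_lt : ∀ N : ℕ, ∀ L M : List FTerm, sizeL L + sizeL M ≤ N →
    (∀ p ∈ L, IsPrim p) → (∀ p ∈ M, IsPrim p) → sumOrd L < sumOrd M →
    ∃ x₀ : ℕ, ∀ x > x₀, sumEval L x < sumEval M x := by
  intro N
  induction N using Nat.strong_induction_on with
  | _ N IH =>
    intro L M hN hLp hMp hord
    have hM : M ≠ [] := by
      rintro rfl
      rw [sumOrd_nil] at hord
      exact absurd hord (not_lt_of_ge zero_le)
    rcases eq_or_ne L [] with rfl | hL
    · obtain ⟨q, hqM⟩ := List.exists_mem_of_ne_nil M hM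
      refine ⟨0, fun x hx => ?_⟩
      calc sumEval [] x = 0 := rfl
        _ < x := hx
        _ ≤ q.eval x := le_eval q x
        _ ≤ sumEval M x := eval_le_sumEval hqM x
    obtain ⟨p, hpL, hpmax⟩ := exists_max FTerm.ordv L hL
    obtain ⟨q, hqM, hqmax⟩ := exists_max FTerm.ordv M hM
    rcases lt_trichotomy p.ordv q.ordv with hpq | hpq | hpq
    · -- dominant case: the max of M strictly dominates everything in L
      have hqfact : ∃ u, q = FTerm.fact u := by
        rcases hMp q hqM with rfl | h
        · exfalso
          have h1 : (1:Ordinal) ≤ p.ordv := one_le_ordv p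
          have : (1:Ordinal) < FTerm.x.ordv := lt_of_le_of_lt h1 hpq
          simp [FTerm.ordv] at this
        · exact h
      obtain ⟨u, rfl⟩ := hqfact
      have hqo : (FTerm.fact u).ordv = ω ^ u.ordv := rfl
      rw [hqo] at hpq
      set k := L.length with hk
      -- for every element of L, eventually k * (its value) < (u.eval x)!
      have hev : ∀ r ∈ L, ∃ x₀ : ℕ, ∀ x > x₀, k * r.eval x < Nat.factorial (u.eval x) := by
        intro r hrL
        rcases hLp r hrL with rfl | ⟨v, rfl⟩
        · refine ⟨k + 1, fun x hx => ?_⟩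
          calc k * FTerm.x.eval x = k * x := rfl
            _ < Nat.factorial x := fact_gt_mul (by omega)
            _ ≤ Nat.factorial (u.eval x) := Nat.factorial_le (le_eval u x)
        · -- r = fact v with ω ^ v.ordv ≤ p.ordv < ω ^ u.ordv
          have hvu : v.ordv < u.ordv := by
            have h1 : ω ^ v.ordv ≤ p.ordv := by
              have := hpmax _ hrL
              exact this
            have h2 : ω ^ v.ordv < ω ^ u.ordv := lt_of_le_of_lt h1 hpq
            exact (opow_lt_opow_iff_right one_lt_omega0).1 h2
          have hsz : sizeL (prims v) + sizeL (prims u) < N := by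
            have h1 : sizeL (prims v) ≤ v.size := sizeL_prims v
            have h2 : sizeL (prims u) ≤ u.size := sizeL_prims u
            have h3 : (FTerm.fact v).size ≤ sizeL L := size_le_sizeL hrL
            have h4 : (FTerm.fact u).size ≤ sizeL M := size_le_sizeL hqM
            simp only [FTerm.size] at h3 h4
            omega
          obtain ⟨x₁, hx₁⟩ := IH _ hsz (prims v) (prims u) le_rfl (prims_prim v) (prims_prim u)
            (by rw [ordv_prims, ordv_prims]; exact hvu)
          refine ⟨max x₁ k, fun x hx => ?_⟩
          have hvx : v.eval x < u.eval x := by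
            have := hx₁ x (lt_of_le_of_lt (le_max_left _ _) hx)
            rwa [eval_prims, eval_prims] at this
          have hkx : k < v.eval x + 1 := by
            have : k < x := lt_of_le_of_lt (le_max_right _ _) hx
            have := le_eval v x
            omega
          calc k * (FTerm.fact v).eval x = k * Nat.factorial (v.eval x) := rfl
            _ < (v.eval x + 1) * Nat.factorial (v.eval x) :=
                Nat.mul_lt_mul_of_lt_of_le hkx le_rfl (Nat.factorial_pos _)
            _ = Nat.factorial (v.eval x + 1) := (Nat.factorial_succ _).symm
            _ ≤ Nat.factorial (u.eval x) := Nat.factorial_le (by omega)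
      obtain ⟨x₀, hx₀⟩ := eventually_all L _ hev
      refine ⟨x₀, fun x hx => ?_⟩
      obtain ⟨r₀, hr₀L, hr₀max⟩ := exists_max (fun r => r.eval x) L hL
      calc sumEval L x ≤ L.length * r₀.eval x := by
            have hb : ∀ a ∈ L.map (fun t => t.eval x), a ≤ r₀.eval x := by
              intro a ha
              obtain ⟨r, hr, rfl⟩ := List.mem_map.1 ha
              exact hr₀max r hr
            have := sum_le_card_mul (L.map fun t => t.eval x) (r₀.eval x) hb
            simpa [sumEval] using this
        _ = k * r₀.eval x := rfl
        _ < Nat.factorial (u.eval x) := hx₀ x hx r₀ hr₀L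
        _ = (FTerm.fact u).eval x := rfl
        _ ≤ sumEval M x := eval_le_sumEval hqM x
    · -- equal maxima: cancel
      have hpq_eval : ∀ m, p.eval m = q.eval m := prim_eval_eq (hLp p hpL) (hMp q hqM) hpq
      have hLperm : L.Perm (p :: L.erase p) := List.perm_cons_erase hpL
      have hMperm : M.Perm (q :: M.erase q) := List.perm_cons_erase hqM
      have hordL : sumOrd L = p.ordv ♯ sumOrd (L.erase p) := by
        rw [sumOrd_perm hLperm, sumOrd_cons]
      have hordM : sumOrd M = q.ordv ♯ sumOrd (M.erase q) := by
        rw [sumOrd_perm hMperm, sumOrd_cons]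
      have hcancel : sumOrd (L.erase p) < sumOrd (M.erase q) := by
        have h1 : q.ordv ♯ sumOrd (L.erase p) < q.ordv ♯ sumOrd (M.erase q) := by
          rw [← hpq, ← hordL, ← hordM] at *
          exact hord
        exact (nadd_lt_nadd_iff_left q.ordv).1 h1
      have hsz' : sizeL (L.erase p) + sizeL (M.erase q) < N := by
        have h1 : sizeL L = p.size + sizeL (L.erase p) := by
          rw [sizeL_perm hLperm, sizeL_cons]
        have h2 : sizeL M = q.size + sizeL (M.erase q) := by
          rw [sizeL_perm hMperm, sizeL_cons]
        have := one_le_size p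
        have := one_le_size q
        omega
      obtain ⟨x₀, hx₀⟩ := IH _ hsz' (L.erase p) (M.erase q) le_rfl
        (fun r hr => hLp r (List.mem_of_mem_erase hr))
        (fun r hr => hMp r (List.mem_of_mem_erase hr)) hcancel
      refine ⟨x₀, fun x hx => ?_⟩
      calc sumEval L x = p.eval x + sumEval (L.erase p) x := by
            rw [sumEval_perm hLperm, sumEval_cons]
        _ < q.eval x + sumEval (M.erase q) x := by
            rw [hpq_eval x]
            exact Nat.add_lt_add_left (hx₀ x hx) _
        _ = sumEval M x := by rw [sumEval_perm hMperm, sumEval_cons]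
    · exfalso
      have := sumOrd_lt_of_max_lt hqmax hpL (hLp p hpL) hpq
      exact absurd hord (not_lt_of_gt this)

theorem ordv_evdom {s t : FTerm} (h : s.ordv < t.ordv) : EvDom s.eval t.eval := by
  obtain ⟨x₀, hx₀⟩ := main_lt (sizeL (prims s) + sizeL (prims t)) (prims s) (prims t) le_rfl
    (prims_prim s) (prims_prim t) (by rw [ordv_prims, ordv_prims]; exact h)
  exact ⟨x₀, fun x hx => by
    have := hx₀ x hx
    rwa [eval_prims, eval_prims] at this⟩

theorem not_evdom_of_eq {f g : ℕ → ℕ} (h : ∀ n, f n = g n) : ¬ EvDom f g := by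
  rintro ⟨x₀, hx₀⟩
  have := hx₀ (x₀ + 1) (Nat.lt_succ_self x₀)
  rw [h] at this
  exact lt_irrefl _ this

theorem evdom_asymm {f g : ℕ → ℕ} (h1 : EvDom f g) (h2 : EvDom g f) : False := by
  obtain ⟨x₁, hx₁⟩ := h1
  obtain ⟨x₂, hx₂⟩ := h2
  have ha := hx₁ (max x₁ x₂ + 1) (by omega)
  have hb := hx₂ (max x₁ x₂ + 1) (by omega)
  omega

theorem evdom_iff {s t : FTerm} : EvDom s.eval t.eval ↔ s.ordv < t.ordv := by
  constructor
  · intro h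
    rcases lt_trichotomy s.ordv t.ordv with h' | h' | h'
    · exact h'
    · exact absurd h (not_evdom_of_eq (ordv_eval_eq h'))
    · exact absurd (evdom_asymm h (ordv_evdom h')) id
  · exact ordv_evdom

theorem ordv_congr {s t : FTerm} (h : ∀ n, s.eval n = t.eval n) : s.ordv = t.ordv := by
  rcases lt_trichotomy s.ordv t.ordv with h' | h' | h'
  · exact absurd (ordv_evdom h') (not_evdom_of_eq h)
  · exact h'
  · exact absurd (ordv_evdom h') (not_evdom_of_eq fun n => (h n).symm)

theorem ordv_surj : ∀ β : Ordinal.{0}, 0 < β → β < eps0 → ∃ t : FTerm, t.ordv = β := by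
  intro β
  induction β using Ordinal.induction with
  | _ β IH =>
    intro hβ0 hβε
    by_cases hfin : β < ω
    · obtain ⟨n, rfl⟩ := Ordinal.lt_omega0.1 hfin
      have key : ∀ m : ℕ, ∃ t : FTerm, t.ordv = ((m + 1 : ℕ) : Ordinal) := by
        intro m
        induction m with
        | zero => exact ⟨FTerm.x, by simp [FTerm.ordv]⟩
        | succ m ih =>
          obtain ⟨t, ht⟩ := ih
          refine ⟨FTerm.add t FTerm.x, ?_⟩
          show t.ordv ♯ (1 : Ordinal) = _
          rw [ht, nadd_one, ← Ordinal.add_one_eq_succ]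
          norm_cast
      obtain ⟨m, rfl⟩ : ∃ m, n = m + 1 := by
        rcases n with _ | m
        · exfalso; simp at hβ0
        · exact ⟨m, rfl⟩
      exact key m
    · push_neg at hfin
      set γ := Ordinal.log ω β with hγ
      have hγβ : ω ^ γ ≤ β := opow_log_le_self ω (ne_of_gt hβ0)
      have hsucc := lt_opow_succ_log_self one_lt_omega0 β
      have hγpos : 0 < γ := by
        rcases eq_zero_or_pos γ with h0 | h
        · exfalso
          rw [← hγ, h0] at hsucc
          rw [show Order.succ (0 : Ordinal) = 1 by
            rw [← Ordinal.add_one_eq_succ, zero_add], opow_one] at hsucc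
          exact absurd hsucc (not_lt_of_ge hfin)
        · exact h
      have hγε : γ < eps0 := lt_of_le_of_lt (Ordinal.log_le_self ω β) hβε
      have hγβlt : γ < β := lt_of_lt_of_le (lt_omega0_opow_self_of_lt_eps0 hγε) hγβ
      obtain ⟨u, hu⟩ := IH γ hγβlt hγpos hγε
      have hβeq : ω ^ γ + (β - ω ^ γ) = β := Ordinal.add_sub_cancel_of_le hγβ
      have hδε : β - ω ^ γ < ω ^ (γ + 1) := by
        rw [Ordinal.add_one_eq_succ]
        exact lt_of_le_of_lt (Ordinal.sub_le_self β _) hsucc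
      rcases eq_or_ne (β - ω ^ γ) 0 with hδ0 | hδ0
      · refine ⟨FTerm.fact u, ?_⟩
        show ω ^ u.ordv = β
        rw [hu]
        rw [hδ0, add_zero] at hβeq
        exact hβeq
      · have hδβ : β - ω ^ γ < β := sub_opow_log_lt (ne_of_gt hβ0)
        obtain ⟨v, hv⟩ := IH _ hδβ (pos_iff_ne_zero.2 hδ0) (hδβ.trans hβε)
        refine ⟨FTerm.add (FTerm.fact u) v, ?_⟩
        show ω ^ u.ordv ♯ v.ordv = β
        rw [hu, hv, omega0_opow_nadd γ _ hδε, hβeq]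

noncomputable def phi (a : S10) : Ordinal.{0} := (Classical.choose a.2).ordv

theorem phi_eval (a : S10) : ∀ n, (Classical.choose a.2).eval n = a.1 n :=
  Classical.choose_spec a.2

theorem evdom_congr {f f' g g' : ℕ → ℕ} (hf : ∀ n, f n = f' n) (hg : ∀ n, g n = g' n) :
    EvDom f g ↔ EvDom f' g' := by
  constructor
  · rintro ⟨x₀, h⟩
    exact ⟨x₀, fun x hx => by rw [← hf, ← hg]; exact h x hx⟩
  · rintro ⟨x₀, h⟩
    exact ⟨x₀, fun x hx => by rw [hf, hg]; exact h x hx⟩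

theorem r10_iff (a b : S10) : r10 a b ↔ phi a < phi b := by
  show EvDom a.1 b.1 ↔ _
  rw [← evdom_congr (phi_eval a) (phi_eval b)]
  exact evdom_iff

theorem phi_inj {a b : S10} (h : phi a = phi b) : a = b := by
  apply Subtype.ext
  funext n
  rw [← phi_eval a n, ← phi_eval b n]
  exact ordv_eval_eq h n

theorem phi_pos (a : S10) : 0 < phi a :=
  lt_of_lt_of_le zero_lt_one (one_le_ordv _)

theorem phi_lt_eps0 (a : S10) : phi a < eps0 := ordv_lt_eps0 _

theorem sub_one_lt_sub_one_iff {α β : Ordinal} (hα : 1 ≤ α) (hβ : 1 ≤ β) :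
    α - 1 < β - 1 ↔ α < β := by
  conv_rhs => rw [← Ordinal.add_sub_cancel_of_le hα, ← Ordinal.add_sub_cancel_of_le hβ]
  exact (add_lt_add_iff_left 1).symm

noncomputable def gmap (a : S10) : eps0.ToType :=
  (Ordinal.ToType.mk (o := eps0)) ⟨phi a - 1,
    lt_of_le_of_lt (Ordinal.sub_le_self _ _) (phi_lt_eps0 a)⟩

theorem gmap_lt_iff (a b : S10) : gmap a < gmap b ↔ r10 a b := by
  rw [r10_iff]
  show (Ordinal.ToType.mk (o := eps0)) _ < (Ordinal.ToType.mk (o := eps0)) _ ↔ _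
  rw [OrderIso.lt_iff_lt]
  exact sub_one_lt_sub_one_iff (Order.one_le_iff_pos.2 (phi_pos a))
    (Order.one_le_iff_pos.2 (phi_pos b))

theorem gmap_bijective : Function.Bijective gmap := by
  constructor
  · intro a b h
    apply phi_inj
    unfold gmap at h
    have h2 : phi a - 1 = phi b - 1 := by
      have := ((Ordinal.ToType.mk (o := eps0))).injective h
      exact Subtype.ext_iff.1 this
    have ha := Ordinal.add_sub_cancel_of_le (Order.one_le_iff_pos.2 (phi_pos a))
    have hb := Ordinal.add_sub_cancel_of_le (Order.one_le_iff_pos.2 (phi_pos b))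
    rw [← ha, ← hb, h2]
  · intro c
    set γ := ((Ordinal.ToType.mk (o := eps0))).symm c with hγc
    have hβ0 : (0 : Ordinal) < 1 + γ.1 := lt_of_lt_of_le zero_lt_one le_self_add
    have hβε : 1 + γ.1 < eps0 := by
      have := Ordinal.principal_add_omega0_opow eps0
        (a := 1) (b := γ.1) (by rw [eps0_fixed]; exact one_lt_eps0)
        (by rw [eps0_fixed]; exact γ.2)
      rwa [eps0_fixed] at this
    obtain ⟨t, ht⟩ := ordv_surj (1 + γ.1) hβ0 hβε
    refine ⟨⟨t.eval, ⟨t, fun n => rfl⟩⟩, ?_⟩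
    have hphi : phi ⟨t.eval, ⟨t, fun n => rfl⟩⟩ = 1 + γ.1 := by
      rw [← ht]
      exact ordv_congr (phi_eval ⟨t.eval, ⟨t, fun n => rfl⟩⟩)
    show (Ordinal.ToType.mk (o := eps0)) _ = c
    conv_rhs => rw [← ((Ordinal.ToType.mk (o := eps0))).apply_symm_apply c]
    congr 1
    apply Subtype.ext
    show phi _ - 1 = (((Ordinal.ToType.mk (o := eps0))).symm c).1
    rw [hphi, Ordinal.add_sub_cancel]


end Aux

open Ordinal NaturalOps in
/-- (S, ≺) is a well-order of order type exactly ε₀. -/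
theorem stmt10 : ∃ h : IsWellOrder S10 r10, @Ordinal.type S10 r10 h = eps0 := by
  haveI htri : IsTrichotomous S10 r10 := ⟨by
    intro a b
    rcases lt_trichotomy (phi a) (phi b) with h | h | h
    · exact fun h1 _ => absurd ((r10_iff a b).2 h) h1
    · exact fun _ _ => phi_inj h
    · exact fun _ h2 => absurd ((r10_iff b a).2 h) h2⟩
  haveI htrans : IsTrans S10 r10 := ⟨by
    intro a b c hab hbc
    exact (r10_iff a c).2 (lt_trans ((r10_iff a b).1 hab) ((r10_iff b c).1 hbc))⟩
  haveI hwf : IsWellFounded S10 r10 := ⟨Subrelation.wf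
    (fun {a b} h => (r10_iff a b).1 h) (InvImage.wf phi Ordinal.lt_wf)⟩
  haveI hwo : IsWellOrder S10 r10 := { }
  haveI hwo2 : IsWellOrder eps0.ToType (· < ·) :=
    ⟨⟩
  refine ⟨hwo, ?_⟩
  have F : r10 ≃r ((· < ·) : eps0.ToType → eps0.ToType → Prop) :=
    ⟨Equiv.ofBijective gmap gmap_bijective, by
      intro a b
      exact gmap_lt_iff a b⟩
  rw [F.ordinal_type_eq, Ordinal.type_toType]
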